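/- Let ℒ be a quasi-definite linear functional on the symmetric algebra Sym(W) of a graded vector space W = ⊕_{m≥1} W^m of finite type, and let {p_n}_{n≥0} be a system of block-orthogonal polynomial vectors (p_n spanning, together with lower degrees, the polynomials of total degree ≤ n). Then for each n, each generator degree m ∈ [1,n], and each basis element w_{m,i} of W^m, there exist unique matrices M^k_{n,m,i} ∈ Mat(r_{n−m}, r_{n−m+k}), k = −m,…,m, such that w_{m,i}·p_{n−m} = Σ_{k=−m}^{m} M^k_{n,m,i} p_{n−m+k}. Moreover M^k_{n,m,i} H_{n−m+k} = H_{n−m} (M^{−k}_{n+k,m,i})^T, where H_n = (p_n, p_n^T) is the (invertible) Gram matrix. -/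

import Mathlib

open scoped Classical

/- **Statement 7.**  The symmetric algebra `Sym(W)` of a graded vector space
`W = ⊕_{m≥1} W^m` of finite type (`dim W^m = N m`, with `N 0 = 0`) is modelled as the
multivariate polynomial ring over the index set `Σ m, Fin (N m)` of a homogeneous basis,
a generator `(m, i)` having degree `m`. -/

/-- Index type of the graded generators. -/
abbrev GIdx (N : ℕ → ℕ) := Σ m : ℕ, Fin (N m)

/-- Weighted (tensor/total) degree of an exponent multi-index. -/
def tdeg {N : ℕ → ℕ} (α : GIdx N →₀ ℕ) : ℕ := α.sum fun s k => s.1 * k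

/-- The monomials of total degree `n` (index set for the vector `w_n`; `r_n` is its
cardinality). -/
def Mon (N : ℕ → ℕ) (n : ℕ) := {α : GIdx N →₀ ℕ // tdeg α = n}

/-- A linear functional on `Sym(W)` is quasi-definite if some basis is orthogonal with
nonvanishing squares. -/
def QuasiDefinite {N : ℕ → ℕ} (ℒ : MvPolynomial (GIdx N) ℝ →ₗ[ℝ] ℝ) : Prop :=
  ∃ (ι : Type) (b : Module.Basis ι ℝ (MvPolynomial (GIdx N) ℝ)),
    (∀ i j, i ≠ j → ℒ (b i * b j) = 0) ∧ ∀ i, ℒ (b i * b i) ≠ 0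

section Aux
variable {N : ℕ → ℕ}

lemma tdeg_add (α β : GIdx N →₀ ℕ) : tdeg (α + β) = tdeg α + tdeg β := by
  unfold tdeg
  apply Finsupp.sum_add_index' <;> intros <;> simp [Nat.mul_add]

lemma tdeg_single (s : GIdx N) : tdeg (Finsupp.single s 1 : GIdx N →₀ ℕ) = s.1 := by
  classical
  simp [tdeg, Finsupp.sum_single_index]

lemma X_mul_monomial (s : GIdx N) (α : GIdx N →₀ ℕ) :
    MvPolynomial.X s * MvPolynomial.monomial α (1 : ℝ) =
      MvPolynomial.monomial (Finsupp.single s 1 + α) (1 : ℝ) := by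
  rw [MvPolynomial.X, MvPolynomial.monomial_mul, one_mul]

end Aux

section Aux2
variable {N : ℕ → ℕ} [∀ n, Fintype (Mon N n)]
  (ℒ : MvPolynomial (GIdx N) ℝ →ₗ[ℝ] ℝ)
  (p : (n : ℕ) → Mon N n → MvPolynomial (GIdx N) ℝ)

/-- the set of degree-`≤ n` monomials -/
def MonSet (N : ℕ → ℕ) (n : ℕ) : Set (MvPolynomial (GIdx N) ℝ) :=
  {q | ∃ α : GIdx N →₀ ℕ, tdeg α ≤ n ∧ q = MvPolynomial.monomial α (1 : ℝ)}

variable (hspan : ∀ n : ℕ,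
      Submodule.span ℝ {q | ∃ k ≤ n, ∃ a : Mon N k, q = p k a} =
      Submodule.span ℝ (MonSet N n))

include hspan in
lemma p_mem_span (n k : ℕ) (hk : k ≤ n) (a : Mon N k) :
    p k a ∈ Submodule.span ℝ (MonSet N n) := by
  rw [← hspan n]
  exact Submodule.subset_span ⟨k, hk, a, rfl⟩

variable (horth : ∀ m n : ℕ, m < n → ∀ α : GIdx N →₀ ℕ, tdeg α = m →
      ∀ a : Mon N n, ℒ (MvPolynomial.monomial α (1 : ℝ) * p n a) = 0)

include hspan horth in
lemma cross_orth_lt {j j' : ℕ} (h : j < j') (c : Mon N j) (b : Mon N j') :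
    ℒ (p j c * p j' b) = 0 := by
  have hmem := p_mem_span p hspan j j le_rfl c
  set Φ : MvPolynomial (GIdx N) ℝ →ₗ[ℝ] ℝ :=
    ℒ ∘ₗ (LinearMap.mulRight ℝ (p j' b)) with hΦ
  have hker : Submodule.span ℝ (MonSet N j) ≤ LinearMap.ker Φ := by
    rw [Submodule.span_le]
    rintro q ⟨α, hα, rfl⟩
    simp only [SetLike.mem_coe, LinearMap.mem_ker, hΦ, LinearMap.coe_comp,
      Function.comp_apply, LinearMap.mulRight_apply]
    exact horth (tdeg α) j' (lt_of_le_of_lt hα h) α rfl b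
  have := hker hmem
  simpa [hΦ] using this

include hspan horth in
lemma cross_orth {j j' : ℕ} (h : j ≠ j') (c : Mon N j) (b : Mon N j') :
    ℒ (p j c * p j' b) = 0 := by
  rcases lt_or_gt_of_ne h with h' | h'
  · exact cross_orth_lt ℒ p hspan horth h' c b
  · rw [mul_comm]
    exact cross_orth_lt ℒ p hspan horth h' b c

end Aux2

section Aux3
set_option linter.unusedSectionVars false
variable {N : ℕ → ℕ} [∀ n, Fintype (Mon N n)]
  (ℒ : MvPolynomial (GIdx N) ℝ →ₗ[ℝ] ℝ)
  (p : (n : ℕ) → Mon N n → MvPolynomial (GIdx N) ℝ)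
  (horth : ∀ m n : ℕ, m < n → ∀ α : GIdx N →₀ ℕ, tdeg α = m →
      ∀ a : Mon N n, ℒ (MvPolynomial.monomial α (1 : ℝ) * p n a) = 0)
  (hlead : ∀ n : ℕ,
      IsUnit (Matrix.of fun a b : Mon N n => ℒ (MvPolynomial.monomial a.1 (1 : ℝ) * p n b)))

include horth hlead in
lemma coeff_eq_zero (K T : ℕ) (c : ∀ j, Mon N j → ℝ) (q : MvPolynomial (GIdx N) ℝ)
    (hq : ∑ j ∈ Finset.range (K + 1), ∑ b : Mon N j, c j b • p j b = q)
    (hT : ∀ α : GIdx N →₀ ℕ, tdeg α < T → ℒ (MvPolynomial.monomial α (1 : ℝ) * q) = 0) :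
    ∀ t, t < T → t ≤ K → ∀ b, c t b = 0 := by
  intro t
  induction t using Nat.strong_induction_on with
  | _ t IH =>
    intro htT htK
    set G : Matrix (Mon N t) (Mon N t) ℝ :=
      Matrix.of fun a b : Mon N t => ℒ (MvPolynomial.monomial a.1 (1 : ℝ) * p t b) with hG
    have key : ∀ a : Mon N t, (G.mulVec (c t)) a = 0 := by
      intro a
      have h1 : ℒ (MvPolynomial.monomial a.1 (1 : ℝ) * q) = 0 := hT a.1 (by rw [a.2]; exact htT)
      rw [← hq, Finset.mul_sum] at h1
      simp only [Finset.mul_sum, mul_smul_comm, map_sum, map_smul, smul_eq_mul] at h1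
      rw [Finset.sum_eq_single_of_mem t (Finset.mem_range.mpr (Nat.lt_succ_of_le htK))] at h1
      · rw [Matrix.mulVec, ← h1]
        simp only [dotProduct, hG, Matrix.of_apply]
        exact Finset.sum_congr rfl fun b _ => mul_comm _ _
      · intro j hj hjt
        rcases lt_or_gt_of_ne hjt with h' | h'
        · apply Finset.sum_eq_zero
          intro b _
          rw [IH j h' (lt_trans h' htT) (Nat.lt_succ_iff.mp (Finset.mem_range.mp hj)) b,
            zero_mul]
        · apply Finset.sum_eq_zero
          intro b _
          rw [horth t j h' a.1 a.2 b, mul_zero]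
    have hdet : IsUnit G.det := (Matrix.isUnit_iff_isUnit_det G).mp (hlead t)
    have hv : G.mulVec (c t) = 0 := funext key
    have h2 := congrArg (fun v => G⁻¹.mulVec v) hv
    simpa [Matrix.mulVec_mulVec, Matrix.nonsing_inv_mul G hdet, Matrix.one_mulVec,
      Matrix.mulVec_zero, funext_iff] using h2

end Aux3

section Aux4
set_option linter.unusedSectionVars false
variable {N : ℕ → ℕ} [∀ n, Fintype (Mon N n)]
  (p : (n : ℕ) → Mon N n → MvPolynomial (GIdx N) ℝ)
  (hspan : ∀ n : ℕ,
      Submodule.span ℝ {q | ∃ k ≤ n, ∃ a : Mon N k, q = p k a} =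
      Submodule.span ℝ (MonSet N n))

include hspan in
lemma exists_rep (s : GIdx N) (n' : ℕ) (a : Mon N n') :
    ∃ c : ∀ j, Mon N j → ℝ,
      ∑ j ∈ Finset.range (n' + s.1 + 1), ∑ b : Mon N j, c j b • p j b =
        MvPolynomial.X s * p n' a := by
  set K := n' + s.1 with hK
  -- step 1 : `X s * p n' a` lies in the span of monomials of degree ≤ K
  have h1 : p n' a ∈ Submodule.span ℝ (MonSet N n') := p_mem_span p hspan n' n' le_rfl a
  have h2 : MvPolynomial.X s * p n' a ∈
      Submodule.map (LinearMap.mulLeft ℝ (MvPolynomial.X s))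
        (Submodule.span ℝ (MonSet N n')) := ⟨_, h1, rfl⟩
  rw [Submodule.map_span] at h2
  have h3 : MvPolynomial.X s * p n' a ∈ Submodule.span ℝ (MonSet N K) := by
    refine Submodule.span_le.mpr ?_ h2
    rintro q ⟨q', ⟨α, hα, rfl⟩, rfl⟩
    refine Submodule.subset_span ⟨Finsupp.single s 1 + α, ?_, ?_⟩
    · rw [tdeg_add, tdeg_single]; omega
    · exact X_mul_monomial s α
  -- step 2 : rewrite as span of the range of an indexed family
  rw [← hspan K] at h3
  set f : (Σ j : Fin (K + 1), Mon N j.1) → MvPolynomial (GIdx N) ℝ :=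
    fun i => p i.1 i.2 with hf
  have hset : {q | ∃ k ≤ K, ∃ a : Mon N k, q = p k a} = Set.range f := by
    ext q
    constructor
    · rintro ⟨k, hk, b, rfl⟩
      exact ⟨⟨⟨k, Nat.lt_succ_of_le hk⟩, b⟩, rfl⟩
    · rintro ⟨⟨⟨k, hk⟩, b⟩, rfl⟩
      exact ⟨k, Nat.lt_succ_iff.mp hk, b, rfl⟩
  rw [hset, Submodule.mem_span_range_iff_exists_fun] at h3
  obtain ⟨c₀, hc₀⟩ := h3
  refine ⟨fun j b => if h : j < K + 1 then c₀ ⟨⟨j, h⟩, b⟩ else 0, ?_⟩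
  rw [← hc₀, ← Finset.univ_sigma_univ, Finset.sum_sigma, Finset.sum_range]
  refine Finset.sum_congr rfl fun j _ => Finset.sum_congr rfl fun b _ => ?_
  simp only [dif_pos j.2, Fin.eta, hf]

end Aux4

/-- graded recurrence relation.  For a quasi-definite `ℒ` and a
block-orthogonal system `{p_n}`, each generator `w_{m,i}` satisfies a `(2m+1)`-term
recurrence `w_{m,i}·p_{n'} = Σ_{j=n'-m}^{n'+m} M_{n'}^j p_j` with unique matrices, and
these matrices satisfy `M_{n'}^j H_j = H_{n'} (M_j^{n'})ᵀ`. -/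
theorem graded_recurrence (N : ℕ → ℕ) (hN0 : N 0 = 0)
    [∀ n, Fintype (Mon N n)]
    (ℒ : MvPolynomial (GIdx N) ℝ →ₗ[ℝ] ℝ) (hqd : QuasiDefinite ℒ)
    (p : (n : ℕ) → Mon N n → MvPolynomial (GIdx N) ℝ)
    -- `p_n`, together with the lower blocks, spans the polynomials of total degree `≤ n`
    (hspan : ∀ n : ℕ,
      Submodule.span ℝ {q | ∃ k ≤ n, ∃ a : Mon N k, q = p k a} =
      Submodule.span ℝ
        {q | ∃ α : GIdx N →₀ ℕ, tdeg α ≤ n ∧ q = MvPolynomial.monomial α (1 : ℝ)})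
    -- block orthogonality: `(w_m, p_nᵀ) = 0` for `m < n`
    (horth : ∀ m n : ℕ, m < n → ∀ α : GIdx N →₀ ℕ, tdeg α = m →
      ∀ a : Mon N n, ℒ (MvPolynomial.monomial α (1 : ℝ) * p n a) = 0)
    -- `(w_n, p_nᵀ)` is invertible
    (hlead : ∀ n : ℕ,
      IsUnit (Matrix.of fun a b : Mon N n => ℒ (MvPolynomial.monomial a.1 (1 : ℝ) * p n b))) :
    ∀ s : GIdx N,
      (∃! M : (n' j : ℕ) → Matrix (Mon N n') (Mon N j) ℝ,
        (∀ n' j : ℕ, (j < n' - s.1 ∨ n' + s.1 < j) → M n' j = 0) ∧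
        (∀ (n' : ℕ) (a : Mon N n'),
          MvPolynomial.X s * p n' a =
            ∑ j ∈ Finset.range (n' + s.1 + 1), ∑ b : Mon N j, M n' j a b • p j b)) ∧
      (∀ M : (n' j : ℕ) → Matrix (Mon N n') (Mon N j) ℝ,
        ((∀ n' j : ℕ, (j < n' - s.1 ∨ n' + s.1 < j) → M n' j = 0) ∧
         (∀ (n' : ℕ) (a : Mon N n'),
          MvPolynomial.X s * p n' a =
            ∑ j ∈ Finset.range (n' + s.1 + 1), ∑ b : Mon N j, M n' j a b • p j b)) →
        -- `M_{n'}^j H_j = H_{n'} (M_j^{n'})ᵀ`, where `H_n = ℒ(p_n p_nᵀ)`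
        ∀ (n' j : ℕ) (a : Mon N n') (b : Mon N j),
          ∑ c : Mon N j, M n' j a c * ℒ (p j c * p j b) =
          ∑ c : Mon N n', ℒ (p n' a * p n' c) * M j n' b c) := by
  intro s
  have hspan' : ∀ n : ℕ,
      Submodule.span ℝ {q | ∃ k ≤ n, ∃ a : Mon N k, q = p k a} =
      Submodule.span ℝ (MonSet N n) := hspan
  have hrep := fun (n' : ℕ) (a : Mon N n') => exists_rep p hspan' s n' a
  set M₀ : (n' j : ℕ) → Matrix (Mon N n') (Mon N j) ℝ :=
    fun n' j => Matrix.of fun a b =>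
      if j ≤ n' + s.1 then (hrep n' a).choose j b else 0 with hM₀
  have hM₀rec : ∀ (n' : ℕ) (a : Mon N n'),
      MvPolynomial.X s * p n' a =
        ∑ j ∈ Finset.range (n' + s.1 + 1), ∑ b : Mon N j, M₀ n' j a b • p j b := by
    intro n' a
    rw [← (hrep n' a).choose_spec]
    refine (Finset.sum_congr rfl fun j hj => Finset.sum_congr rfl fun b _ => ?_).symm
    have hjle : j ≤ n' + s.1 := Nat.lt_succ_iff.mp (Finset.mem_range.mp hj)
    simp [hM₀, hjle]
  have hM₀win : ∀ n' j : ℕ, (j < n' - s.1 ∨ n' + s.1 < j) → M₀ n' j = 0 := by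
    intro n' j hj
    ext a b
    rcases hj with hj | hj
    · have hT0 : ∀ α : GIdx N →₀ ℕ, tdeg α < n' - s.1 →
          ℒ (MvPolynomial.monomial α (1 : ℝ) * (MvPolynomial.X s * p n' a)) = 0 := by
        intro α hα
        have hmul : MvPolynomial.monomial α (1 : ℝ) * (MvPolynomial.X s * p n' a) =
            MvPolynomial.monomial (α + Finsupp.single s 1) (1 : ℝ) * p n' a := by
          rw [← mul_assoc, MvPolynomial.X, MvPolynomial.monomial_mul, one_mul]
        rw [hmul]
        refine horth _ n' ?_ _ rfl a
        rw [tdeg_add, tdeg_single]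
        omega
      have hz := coeff_eq_zero ℒ p horth hlead (n' + s.1) (n' - s.1) (hrep n' a).choose _
        (hrep n' a).choose_spec hT0 j hj (by omega) b
      simp [hM₀, (by omega : j ≤ n' + s.1), hz]
    · simp only [hM₀, Matrix.of_apply, Matrix.zero_apply]
      rw [if_neg (by omega : ¬ j ≤ n' + s.1)]
  constructor
  · refine ⟨M₀, ⟨hM₀win, hM₀rec⟩, ?_⟩
    rintro M' ⟨hwin', hrec'⟩
    funext n' j
    by_cases hj : j ≤ n' + s.1
    · ext a b
      have hsum : ∑ k ∈ Finset.range (n' + s.1 + 1),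
          ∑ c : Mon N k, (M' n' k a c - M₀ n' k a c) • p k c = 0 := by
        simp only [sub_smul, Finset.sum_sub_distrib]
        rw [← hrec' n' a, ← hM₀rec n' a, sub_self]
      have hz := coeff_eq_zero ℒ p horth hlead (n' + s.1) (n' + s.1 + 1)
        (fun k c => M' n' k a c - M₀ n' k a c) 0 hsum (by simp) j (by omega) hj b
      exact sub_eq_zero.mp hz
    · rw [hwin' n' j (Or.inr (by omega)), hM₀win n' j (Or.inr (by omega))]
  · rintro M ⟨hwin, hrec⟩ n' j a b
    have key : ∀ (n₁ n₂ : ℕ) (a₁ : Mon N n₁) (b₂ : Mon N n₂),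
        ℒ (MvPolynomial.X s * p n₁ a₁ * p n₂ b₂) =
          ∑ c : Mon N n₂, M n₁ n₂ a₁ c * ℒ (p n₂ c * p n₂ b₂) := by
      intro n₁ n₂ a₁ b₂
      rw [hrec n₁ a₁, Finset.sum_mul]
      simp only [Finset.sum_mul, smul_mul_assoc, map_sum, map_smul, smul_eq_mul]
      by_cases hn₂ : n₂ ∈ Finset.range (n₁ + s.1 + 1)
      · rw [Finset.sum_eq_single_of_mem n₂ hn₂]
        intro j' _ hne
        apply Finset.sum_eq_zero; intro c _
        rw [cross_orth ℒ p hspan' horth hne c b₂, mul_zero]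
      · rw [Finset.sum_eq_zero, eq_comm]
        · apply Finset.sum_eq_zero; intro c _
          have hz : M n₁ n₂ = 0 := hwin n₁ n₂ (Or.inr (by
            simp only [Finset.mem_range] at hn₂; omega))
          rw [hz]
          simp
        · intro j' hj'
          apply Finset.sum_eq_zero; intro c _
          have hne : j' ≠ n₂ := fun h => hn₂ (h ▸ hj')
          rw [cross_orth ℒ p hspan' horth hne c b₂, mul_zero]
    calc ∑ c : Mon N j, M n' j a c * ℒ (p j c * p j b)
        = ℒ (MvPolynomial.X s * p n' a * p j b) := (key n' j a b).symm
      _ = ℒ (MvPolynomial.X s * p j b * p n' a) := by ring_nf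
      _ = ∑ c : Mon N n', M j n' b c * ℒ (p n' c * p n' a) := key j n' b a
      _ = ∑ c : Mon N n', ℒ (p n' a * p n' c) * M j n' b c :=
          Finset.sum_congr rfl fun c _ => by rw [mul_comm (M j n' b c), mul_comm (p n' c)]
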